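/- The number of factors ξ of η^n with |ξ| ≥ k (counted as distinct words), where η is a prime binary word of length k, equals the number of pairs (i,j) with 1 ≤ i ≤ k, k ≤ j ≤ kn, and i+j−1 ≤ kn; in particular each such factor is uniquely determined by its length and its starting position modulo k. -/

import Mathlib

open Filter

/-- Number of occurrences of `ξ` as a factor of `w` (occurrence at position `i`
means `ξ = w_{i+1}...w_{i+|ξ|}`). -/
def occ (w ξ : List Bool) : ℕ :=
  ((List.range w.length).filter (fun i => ξ.isPrefixOf (w.drop i))).length

/-- `ℓ`-fold concatenation `η^ℓ` of the word `η`. -/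
def wpow (η : List Bool) (ℓ : ℕ) : List Bool := (List.replicate ℓ η).flatten

/-- The Kamae–Xue complexity `Σ(w) = Σ_{ξ ∈ {0,1}^+} |w|_ξ²`.  Since only
factors of `w` contribute nonzero terms, the sum is taken over the (finite) set
of nonempty sublists of `w`, which contains all factors of `w`. -/
def kxSum (w : List Bool) : ℕ :=
  ∑ ξ ∈ w.sublists.toFinset.filter (fun ξ => ξ ≠ []), (occ w ξ) ^ 2

/-- `Λ(w) = max{|η|²(ℓ+1)³ : η nonempty, ℓ ≥ 1, η^ℓ a factor of w}`. -/
noncomputable def Lam (w : List Bool) : ℕ :=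
  sSup {m | ∃ η ℓ, η ≠ ([] : List Bool) ∧ 1 ≤ ℓ ∧ wpow η ℓ <:+: w ∧
    m = η.length ^ 2 * (ℓ + 1) ^ 3}

/-- A nonempty word is prime (primitive) if it is not a proper power. -/
def IsPrimeWord (η : List Bool) : Prop :=
  η ≠ [] ∧ ∀ ζ ℓ, 2 ≤ ℓ → η ≠ wpow ζ ℓ

/-- `|v|_{ξ,m}`: occurrences of `ξ` in `v` ending in the last `m` positions. -/
def occEnd (v ξ : List Bool) (m : ℕ) : ℕ :=
  ((List.range v.length).filter
    (fun i => ξ.isPrefixOf (v.drop i) && decide (v.length < i + ξ.length + m))).length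

/-- The prefix `x_1 x_2 ⋯ x_n` of the infinite sequence `x`. -/
def pref (x : ℕ → Bool) (n : ℕ) : List Bool := (List.range n).map x
lemma wpow_length (η : List Bool) (ℓ : ℕ) : (wpow η ℓ).length = ℓ * η.length := by
  rw [wpow, List.length_flatten, List.map_replicate, List.sum_replicate, smul_eq_mul]

lemma wpow_add (η : List Bool) (a b : ℕ) : wpow η (a + b) = wpow η a ++ wpow η b := by
  rw [wpow, wpow, wpow, List.replicate_add, List.flatten_append]

lemma wpow_one (η : List Bool) : wpow η 1 = η := by simp [wpow]

lemma comm_pow : ∀ (N : ℕ) (u v : List Bool), u.length + v.length ≤ N → u ++ v = v ++ u →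
    ∃ w a b, u = wpow w a ∧ v = wpow w b := by
  intro N
  induction N with
  | zero =>
    intro u v hl _
    have hu : u = [] := List.eq_nil_of_length_eq_zero (by omega)
    have hv : v = [] := List.eq_nil_of_length_eq_zero (by omega)
    exact ⟨[], 0, 0, by simp [wpow, hu], by simp [wpow, hv]⟩
  | succ N ih =>
    intro u v hl h
    rcases eq_or_ne u [] with rfl | hu
    · exact ⟨v, 0, 1, by simp [wpow], by simp [wpow]⟩
    rcases eq_or_ne v [] with rfl | hv
    · exact ⟨u, 1, 0, by simp [wpow], by simp [wpow]⟩
    rcases le_total u.length v.length with hle | hle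
    · have hpre : v.take u.length = u := by
        have h1 : (u ++ v).take u.length = u := List.take_left
        rw [h] at h1
        rwa [List.take_append_of_le_length hle] at h1
      have hv' : v = u ++ v.drop u.length := by
        conv_lhs => rw [← List.take_append_drop u.length v]
        rw [hpre]
      set v' := v.drop u.length with hv'def
      have key : u ++ (u ++ v') = u ++ (v' ++ u) := by
        calc u ++ (u ++ v') = u ++ v := by rw [← hv']
          _ = v ++ u := h
          _ = (u ++ v') ++ u := by rw [← hv']
          _ = u ++ (v' ++ u) := by rw [List.append_assoc]
      have hcomm := List.append_cancel_left key
      have hlen2 : u.length + v'.length ≤ N := by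
        have h1 : 0 < u.length := List.length_pos_iff.mpr hu
        have h2 : v'.length = v.length - u.length := by simp [hv'def]
        omega
      obtain ⟨w, a, b, hwa, hwb⟩ := ih u v' hlen2 hcomm
      exact ⟨w, a, a + b, hwa, by rw [hv', hwa, hwb, ← wpow_add]⟩
    · have hpre : u.take v.length = v := by
        have h1 : (v ++ u).take v.length = v := List.take_left
        rw [← h] at h1
        rwa [List.take_append_of_le_length hle] at h1
      have hu' : u = v ++ u.drop v.length := by
        conv_lhs => rw [← List.take_append_drop v.length u]
        rw [hpre]
      set u' := u.drop v.length with hu'def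
      have key : v ++ (v ++ u') = v ++ (u' ++ v) := by
        calc v ++ (v ++ u') = v ++ u := by rw [← hu']
          _ = u ++ v := h.symm
          _ = (v ++ u') ++ v := by rw [← hu']
          _ = v ++ (u' ++ v) := by rw [List.append_assoc]
      have hcomm := List.append_cancel_left key
      have hlen2 : v.length + u'.length ≤ N := by
        have h1 : 0 < v.length := List.length_pos_iff.mpr hv
        have h2 : u'.length = u.length - v.length := by simp [hu'def]
        omega
      obtain ⟨w, a, b, hwa, hwb⟩ := ih v u' hlen2 hcomm
      exact ⟨w, a + b, a, by rw [hu', hwa, hwb, ← wpow_add], hwa⟩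

lemma prime_no_rot (η : List Bool) (hη : IsPrimeWord η) (s : ℕ)
    (h1 : 0 < s) (h2 : s < η.length) (h : η.drop s ++ η.take s = η) : False := by
  have hc : η.take s ++ η.drop s = η.drop s ++ η.take s := by
    rw [List.take_append_drop, h]
  obtain ⟨w, a, b, hwa, hwb⟩ := comm_pow ((η.take s).length + (η.drop s).length)
    (η.take s) (η.drop s) le_rfl hc
  have hta : (η.take s).length = s := by rw [List.length_take]; omega
  have htb : 0 < (η.drop s).length := by rw [List.length_drop]; omega
  have ha : a ≠ 0 := by
    rintro rfl
    simp only [wpow, List.replicate_zero, List.flatten_nil] at hwa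
    rw [hwa] at hta; simp at hta; omega
  have hb : b ≠ 0 := by
    rintro rfl
    simp only [wpow, List.replicate_zero, List.flatten_nil] at hwb
    rw [hwb] at htb; simp at htb
  have heq : η = wpow w (a + b) := by
    rw [wpow_add, ← hwa, ← hwb, List.take_append_drop]
  exact hη.2 w (a + b) (by omega) heq

lemma take_drop_shift (η : List Bool) (n m r j : ℕ) (hm : m ≤ n)
    (hj : r + j ≤ (n - m) * η.length) :
    ((wpow η n).drop (m * η.length + r)).take j = ((wpow η n).drop r).take j := by
  have hsplit1 : wpow η n = wpow η m ++ wpow η (n - m) := by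
    rw [← wpow_add]; congr 1; omega
  have hsplit2 : wpow η n = wpow η (n - m) ++ wpow η m := by
    rw [← wpow_add]; congr 1; omega
  have hlen1 : (wpow η m).length = m * η.length := wpow_length _ _
  have hlen2 : (wpow η (n - m)).length = (n - m) * η.length := wpow_length _ _
  conv_lhs => rw [hsplit1]
  conv_rhs => rw [hsplit2]
  rw [List.drop_append, List.drop_append]
  rw [hlen1, hlen2]
  rw [show m * η.length + r - m * η.length = r by omega]
  rw [List.drop_eq_nil_of_le (by omega : (wpow η m).length ≤ m * η.length + r)]
  rw [show r - (n - m) * η.length = 0 by omega, List.drop_zero, List.nil_append]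
  rw [List.take_append_of_le_length]
  rw [List.length_drop, hlen2]; omega

lemma take_k_drop (η : List Bool) (n r : ℕ) (hr : r ≤ η.length) (hn : 2 ≤ n) :
    ((wpow η n).drop r).take η.length = η.drop r ++ η.take r := by
  have hsplit : wpow η n = η ++ (η ++ wpow η (n - 2)) := by
    conv_lhs => rw [show n = 1 + (1 + (n - 2)) by omega]
    rw [wpow_add, wpow_add, wpow_one]
  rw [hsplit, List.drop_append,
    show r - η.length = 0 by omega, List.drop_zero]
  rw [List.take_append]
  rw [List.take_of_length_le (by rw [List.length_drop]; omega)]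
  rw [List.length_drop, show η.length - (η.length - r) = r by omega]
  rw [List.take_append_of_le_length hr]

lemma inj_key (η : List Bool) (k n : ℕ) (hη : IsPrimeWord η) (hk : η.length = k)
    (r r' j : ℕ) (hrr : r < r') (hr' : r' < k) (hjk : k ≤ j) (hbd : r' + j ≤ k * n) :
    ((wpow η n).drop r).take j ≠ ((wpow η n).drop r').take j := by
  intro heq
  have hk1 : 1 ≤ k := by omega
  have hn2 : 2 ≤ n := by
    by_contra hc
    interval_cases n <;> omega
  have hkey : ((wpow η n).drop r).take η.length = ((wpow η n).drop r').take η.length := by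
    have := congrArg (List.take k) heq
    rw [List.take_take, List.take_take, Nat.min_eq_left hjk] at this
    rw [hk]; exact this
  rw [take_k_drop η n r (by omega) hn2, take_k_drop η n r' (by omega) hn2] at hkey
  have hrot : η.rotate r = η.rotate r' := by
    rw [List.rotate_eq_drop_append_take (by omega : r ≤ η.length),
        List.rotate_eq_drop_append_take (by omega : r' ≤ η.length)]
    exact hkey
  have h1 := congrArg (fun l => List.rotate l (k - r)) hrot
  simp only [List.rotate_rotate] at h1
  rw [show r + (k - r) = k by omega, show r' + (k - r) = (r' - r) + k by omega,
    ← List.rotate_rotate] at h1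
  have e1 : η.rotate k = η := by rw [← hk, List.rotate_length]
  have e2 : (η.rotate (r' - r)).rotate k = η.rotate (r' - r) := by
    have hkk : k = (η.rotate (r' - r)).length := by rw [List.length_rotate, hk]
    rw [hkk, List.rotate_length]
  rw [e1, e2] at h1
  have hdt : η.drop (r' - r) ++ η.take (r' - r) = η := by
    rw [← List.rotate_eq_drop_append_take (by omega : r' - r ≤ η.length), ← h1]
  exact prime_no_rot η hη (r' - r) (by omega) (by omega) hdt

/-- the number of distinct factors `ξ` of `η^n` with `|ξ| ≥ k`
(`η` prime of length `k`) equals the number of pairs `(i,j)` with `1 ≤ i ≤ k`,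
`k ≤ j ≤ kn`, `i + j − 1 ≤ kn`. -/
theorem card_factors_pow (η : List Bool) (k n : ℕ)
    (hη : IsPrimeWord η) (hk : η.length = k) :
    ((wpow η n).sublists.toFinset.filter
        (fun ξ => k ≤ ξ.length ∧ ξ <:+: wpow η n)).card =
      (((Finset.Icc 1 k) ×ˢ (Finset.Icc k (k * n))).filter
        (fun p => p.1 + p.2 ≤ k * n + 1)).card := by
  have hne := hη.1
  have hk1 : 1 ≤ k := by rw [← hk]; exact List.length_pos_iff.mpr hne
  have hwlen : (wpow η n).length = n * k := by rw [wpow_length, hk]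
  have hnk : n * k = k * n := Nat.mul_comm n k
  symm
  apply Finset.card_bij (fun p _ => ((wpow η n).drop (p.1 - 1)).take p.2)
  · rintro ⟨i, j⟩ hp
    simp only [Finset.mem_filter, Finset.mem_product, Finset.mem_Icc] at hp
    obtain ⟨⟨⟨hi1, hi2⟩, hj1, hj2⟩, hsum⟩ := hp
    have hinf : ((wpow η n).drop (i - 1)).take j <:+: wpow η n :=
      (List.take_prefix _ _).isInfix.trans (List.drop_suffix _ _).isInfix
    have hlen : (((wpow η n).drop (i - 1)).take j).length = j := by
      rw [List.length_take, List.length_drop, hwlen]; omega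
    refine Finset.mem_filter.mpr
      ⟨List.mem_toFinset.mpr (List.mem_sublists.mpr hinf.sublist), ?_, hinf⟩
    rw [hlen]; omega
  · rintro ⟨i, j⟩ h1 ⟨i', j'⟩ h2 heq
    simp only [Finset.mem_filter, Finset.mem_product, Finset.mem_Icc] at h1 h2
    obtain ⟨⟨⟨hi1, hi2⟩, hj1, hj2⟩, hsum⟩ := h1
    obtain ⟨⟨⟨hi1', hi2'⟩, hj1', hj2'⟩, hsum'⟩ := h2
    have hjj : j = j' := by
      have := congrArg List.length heq
      rw [List.length_take, List.length_take, List.length_drop, List.length_drop,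
        hwlen] at this
      omega
    subst hjj
    have hii : i = i' := by
      by_contra hne2
      rcases Nat.lt_or_ge i i' with hlt | hge
      · exact inj_key η k n hη hk (i - 1) (i' - 1) j (by omega) (by omega) hj1
          (by omega) heq
      · exact inj_key η k n hη hk (i' - 1) (i - 1) j (by omega) (by omega) hj1
          (by omega) heq.symm
    rw [hii]
  · intro ξ hξ
    simp only [Finset.mem_filter, List.mem_toFinset, List.mem_sublists] at hξ
    obtain ⟨hsub, hklen, hinf⟩ := hξ
    obtain ⟨s, t, hst⟩ := hinf
    have hxi : ((wpow η n).drop s.length).take ξ.length = ξ := by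
      have hdrop : (wpow η n).drop s.length = ξ ++ t := by
        rw [← hst, List.append_assoc, List.drop_left]
      rw [hdrop, List.take_left]
    have hp : s.length + ξ.length ≤ n * k := by
      have := congrArg List.length hst
      simp only [List.length_append] at this
      rw [hwlen] at this; omega
    set p := s.length with hpdef
    set j := ξ.length with hjdef
    have hmod : p % k < k := Nat.mod_lt p (by omega)
    have hdm : k * (p / k) + p % k = p := Nat.div_add_mod p k
    have hmn : p / k ≤ n := by
      have h1 : k * (p / k) ≤ p := Nat.le.intro hdm
      by_contra hc
      push_neg at hc
      have h2 : k * (n + 1) ≤ k * (p / k) := Nat.mul_le_mul_left k hc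
      have h3 : k * (n + 1) = k * n + k := by ring
      omega
    have hbound : p % k + j ≤ (n - p / k) * η.length := by
      rw [hk]
      have h4 : (n - p / k) * k = n * k - (p / k) * k := Nat.sub_mul n (p / k) k
      have h5 : (p / k) * k = k * (p / k) := Nat.mul_comm _ _
      omega
    have hshift := take_drop_shift η n (p / k) (p % k) j hmn hbound
    rw [hk] at hshift
    refine ⟨(p % k + 1, j), ?_, ?_⟩
    · simp only [Finset.mem_filter, Finset.mem_product, Finset.mem_Icc]
      omega
    · simp only
      have h6 : p / k * k = k * (p / k) := Nat.mul_comm _ _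
      rw [show p % k + 1 - 1 = p % k by omega, ← hshift,
        show p / k * k + p % k = p by omega]
      exact hxi
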